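/- In the Poincaré model Ψ: 𝔻² × 𝕊ⁿ → Ĥ^{2,n}, two points x = Ψ(u,v) and x' = Ψ(u',v') of Ĥ^{2,n} are joined by a spacelike geodesic if and only if d_{𝕊ⁿ}(v,v') < d_{𝕊²}(u,u'), where d_{𝕊²} is the hemispherical distance on 𝔻² (induced by the metric (2/(1+‖u‖²))²|du|²) and d_{𝕊ⁿ} is the round metric on 𝕊ⁿ. -/

import Mathlib

/-- The signature `(2, n+1)` bilinear form on `ℝ^{n+3}`. -/
noncomputable def bform (n : ℕ) (x y : Fin (n + 3) → ℝ) : ℝ :=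
  ∑ i : Fin (n + 3), (if (i : ℕ) < 2 then (1 : ℝ) else -1) * (x i * y i)

section Aux

variable {n : ℕ}

lemma bform_symm (x y : Fin (n + 3) → ℝ) : bform n x y = bform n y x := by
  unfold bform; exact Finset.sum_congr rfl fun i _ => by ring

lemma bform_add_left (x y z : Fin (n + 3) → ℝ) :
    bform n (x + y) z = bform n x z + bform n y z := by
  unfold bform; rw [← Finset.sum_add_distrib]
  exact Finset.sum_congr rfl fun i _ => by by_cases h : (i:ℕ) < 2 <;> simp [h, Pi.add_apply] <;> ring

lemma bform_smul_left (c : ℝ) (x z : Fin (n + 3) → ℝ) :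
    bform n (c • x) z = c * bform n x z := by
  unfold bform; rw [Finset.mul_sum]
  exact Finset.sum_congr rfl fun i _ => by by_cases h : (i:ℕ) < 2 <;> simp [h, Pi.smul_apply] <;> ring

lemma bform_add_right (x y z : Fin (n + 3) → ℝ) :
    bform n x (y + z) = bform n x y + bform n x z := by
  rw [bform_symm, bform_add_left, bform_symm y x, bform_symm z x]

lemma bform_smul_right (c : ℝ) (x z : Fin (n + 3) → ℝ) :
    bform n x (c • z) = c * bform n x z := by
  rw [bform_symm, bform_smul_left, bform_symm z x]

lemma bform_sub_left (x y z : Fin (n + 3) → ℝ) :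
    bform n (x - y) z = bform n x z - bform n y z := by
  have : x - y = x + (-1 : ℝ) • y := by funext i; simp; ring
  rw [this, bform_add_left, bform_smul_left]; ring

lemma bform_sub_right (x y z : Fin (n + 3) → ℝ) :
    bform n x (y - z) = bform n x y - bform n x z := by
  rw [bform_symm, bform_sub_left, bform_symm y x, bform_symm z x]

lemma bform_zero_left (z : Fin (n + 3) → ℝ) : bform n 0 z = 0 := by
  unfold bform; simp

lemma bform_zero_right (z : Fin (n + 3) → ℝ) : bform n z 0 = 0 := by
  rw [bform_symm, bform_zero_left]

lemma bform_comb (a b c d : ℝ) (x y z w : Fin (n + 3) → ℝ) :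
    bform n (a • x + b • y) (c • z + d • w) =
      a * c * bform n x z + a * d * bform n x w + b * c * bform n y z +
        b * d * bform n y w := by
  rw [bform_add_left, bform_smul_left, bform_smul_left, bform_add_right, bform_add_right,
    bform_smul_right, bform_smul_right, bform_smul_right, bform_smul_right]
  ring


lemma bform_lower_zero (z : Fin (n + 3) → ℝ)
    (h0 : ∀ i : Fin (n + 3), (i : ℕ) < 2 → z i = 0) :
    bform n z z = -∑ i : Fin (n + 3), (z i) ^ 2 := by
  unfold bform
  rw [← Finset.sum_neg_distrib]
  refine Finset.sum_congr rfl fun i _ => ?_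
  by_cases h : (i : ℕ) < 2
  · simp [h, h0 i h]
  · simp [h]; ring

lemma bform_neg_perp (n : ℕ) (E : Submodule ℝ (Fin (n + 3) → ℝ))
    (hE2 : Module.finrank ℝ E = 2)
    (hEpos : ∀ u ∈ E, u ≠ 0 → 0 < bform n u u)
    (w : Fin (n + 3) → ℝ) (hw : ∀ e ∈ E, bform n e w = 0) (hw0 : w ≠ 0) :
    bform n w w < 0 := by
  by_contra hcon
  push_neg at hcon
  have hwE : w ∉ E := fun h => absurd (hw w h) (ne_of_gt (hEpos w h hw0))
  set V := E ⊔ (ℝ ∙ w) with hV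
  have hinf : E ⊓ (ℝ ∙ w) = ⊥ := by
    rw [Submodule.eq_bot_iff]
    rintro z ⟨hzE, hzw⟩
    rcases Submodule.mem_span_singleton.mp hzw with ⟨c, rfl⟩
    rcases eq_or_ne c 0 with rfl | hc
    · simp
    · exact (hwE ((E.smul_mem_iff hc).mp hzE)).elim
  have hVrank : Module.finrank ℝ V = 3 := by
    have h := Submodule.finrank_sup_add_finrank_inf_eq E (ℝ ∙ w)
    rw [hinf, hE2, finrank_span_singleton hw0] at h
    simpa using h
  -- the projection onto the first two coordinates
  let f : V →ₗ[ℝ] (Fin 2 → ℝ) :=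
    LinearMap.pi fun i : Fin 2 =>
      (LinearMap.proj (Fin.castLE (by omega) i)).comp V.subtype
  have hker : LinearMap.ker f ≠ ⊥ := by
    intro hbot
    have h1 := LinearMap.finrank_range_add_finrank_ker f
    rw [hbot, hVrank] at h1
    have h2 : Module.finrank ℝ (LinearMap.range f) ≤ Module.finrank ℝ (Fin 2 → ℝ) :=
      Submodule.finrank_le _
    simp [finrank_bot] at h1
    simp [Module.finrank_pi] at h2
    omega
  rcases (Submodule.ne_bot_iff _).mp hker with ⟨z, hzker, hz0⟩
  have hz0' : (z : Fin (n + 3) → ℝ) ≠ 0 := fun h => hz0 (Subtype.ext h)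
  have hzlow : ∀ i : Fin (n + 3), (i : ℕ) < 2 → (z : Fin (n + 3) → ℝ) i = 0 := by
    intro i hi
    have := congrFun (LinearMap.mem_ker.mp hzker) ⟨(i : ℕ), hi⟩
    simpa [f, Fin.castLE, Fin.ext_iff] using this
  -- decompose z
  rcases Submodule.mem_sup.mp z.2 with ⟨e, he, c, hc, hz⟩
  rcases Submodule.mem_span_singleton.mp hc with ⟨t, rfl⟩
  have hee : 0 ≤ bform n e e := by
    rcases eq_or_ne e 0 with rfl | h
    · simp [bform]
    · exact le_of_lt (hEpos e he h)
  have hbz : 0 ≤ bform n (z : Fin (n + 3) → ℝ) (z : Fin (n + 3) → ℝ) := by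
    rw [← hz]
    have h1 : bform n e (t • w) = t * bform n e w := by
      rw [bform_smul_right]
    have h2 : bform n (t • w) e = t * bform n e w := by
      rw [bform_smul_left, bform_symm]
    rw [bform_add_left, bform_add_right, bform_add_right, h1, h2, hw e he,
      bform_smul_left, bform_smul_right]
    nlinarith [mul_self_nonneg t]
  have hneg := bform_lower_zero (n := n) (z : Fin (n + 3) → ℝ) hzlow
  have hsum : ∑ i : Fin (n + 3), ((z : Fin (n + 3) → ℝ) i) ^ 2 = 0 := by
    have : 0 ≤ ∑ i : Fin (n + 3), ((z : Fin (n + 3) → ℝ) i) ^ 2 :=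
      Finset.sum_nonneg fun i _ => sq_nonneg _
    linarith [hbz, hneg ▸ hbz]
  apply hz0'
  funext i
  have := (Finset.sum_eq_zero_iff_of_nonneg (fun i _ => sq_nonneg _)).mp hsum i
    (Finset.mem_univ i)
  exact pow_eq_zero_iff (by norm_num) |>.mp this

lemma aux_cs (a b c : ℝ) (hb : 0 < b) (h : 0 ≤ b * (a * b - c ^ 2)) : c ^ 2 ≤ a * b := by
  nlinarith


end Aux

set_option maxHeartbeats 1000000

/-- The Poincaré model map `Ψ(u,v) = (2/(1-‖u‖²))u + ((1+‖u‖²)/(1-‖u‖²))v`. -/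
noncomputable def Psi (n : ℕ) (p : (Fin (n + 3) → ℝ) × (Fin (n + 3) → ℝ)) :
    Fin (n + 3) → ℝ :=
  (2 / (1 - bform n p.1 p.1)) • p.1 + ((1 + bform n p.1 p.1) / (1 - bform n p.1 p.1)) • p.2

/-- `x` and `y` are joined by a spacelike geodesic of `Ĥ^{2,n}`. -/
def JoinedSpacelike (n : ℕ) (x y : Fin (n + 3) → ℝ) : Prop :=
  ∃ v : Fin (n + 3) → ℝ, bform n v v = 1 ∧ bform n x v = 0 ∧
    ∃ t : ℝ, y = Real.cosh t • x + Real.sinh t • v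

/-- The round distance on `𝕊ⁿ ⊂ E^⊥`: `cos (d(v,v')) = -⟨v,v'⟩`. -/
noncomputable def sphDist (n : ℕ) (v v' : Fin (n + 3) → ℝ) : ℝ :=
  Real.arccos (-(bform n v v'))

/-- The hemispherical distance on `𝔻²` (for the metric `(2/(1+‖u‖²))²|du|²`):
`cos (d(u,u')) = (2/(1+‖u‖²))(2/(1+‖u'‖²))⟨u,u'⟩ + ((1-‖u‖²)/(1+‖u‖²))((1-‖u'‖²)/(1+‖u'‖²))`. -/
noncomputable def hemiDist (n : ℕ) (u u' : Fin (n + 3) → ℝ) : ℝ :=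
  Real.arccos ((2 / (1 + bform n u u)) * (2 / (1 + bform n u' u')) * bform n u u' +
    ((1 - bform n u u) / (1 + bform n u u)) * ((1 - bform n u' u') / (1 + bform n u' u')))

/-- In the Poincaré model `Ψ : 𝔻² × 𝕊ⁿ → Ĥ^{2,n}` of a positive definite 2-plane `E`,
two points `x = Ψ(u,v)` and `x' = Ψ(u',v')` of `Ĥ^{2,n}` are joined by a spacelike geodesic
iff `d_{𝕊ⁿ}(v,v') < d_{𝕊²}(u,u')`. -/
theorem stmt4 (n : ℕ) (E : Submodule ℝ (Fin (n + 3) → ℝ))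
    (hE2 : Module.finrank ℝ E = 2)
    (hEpos : ∀ u ∈ E, u ≠ 0 → 0 < bform n u u)
    (u v u' v' : Fin (n + 3) → ℝ)
    (hu : u ∈ E) (hu1 : bform n u u < 1)
    (hv : ∀ w ∈ E, bform n w v = 0) (hv1 : bform n v v = -1)
    (hu' : u' ∈ E) (hu'1 : bform n u' u' < 1)
    (hv' : ∀ w ∈ E, bform n w v' = 0) (hv'1 : bform n v' v' = -1)
    (hne : (u, v) ≠ (u', v')) :
    JoinedSpacelike n (Psi n (u, v)) (Psi n (u', v')) ↔
      sphDist n v v' < hemiDist n u u' := by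
  unfold sphDist hemiDist
  have hperp : ∀ w : Fin (n + 3) → ℝ, (∀ e ∈ E, bform n e w = 0) → w ≠ 0 →
      bform n w w < 0 := bform_neg_perp n E hE2 hEpos
  -- orthogonality facts
  have huv : bform n u v = 0 := hv u hu
  have huv' : bform n u v' = 0 := hv' u hu
  have hu'v : bform n u' v = 0 := hv u' hu'
  have hu'v' : bform n u' v' = 0 := hv' u' hu'
  have hvu : bform n v u = 0 := by rw [bform_symm]; exact huv
  have hv'u : bform n v' u = 0 := by rw [bform_symm]; exact huv'
  have hvu' : bform n v u' = 0 := by rw [bform_symm]; exact hu'v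
  have hv'u' : bform n v' u' = 0 := by rw [bform_symm]; exact hu'v'
  have hv'v : bform n v' v = bform n v v' := bform_symm v' v
  have hu'u : bform n u' u = bform n u u' := bform_symm u' u
  -- nonnegativity of q, q'
  have hq0 : 0 ≤ bform n u u := by
    rcases eq_or_ne u 0 with rfl | h
    · rw [bform_zero_left]
    · exact le_of_lt (hEpos u hu h)
  have hq'0 : 0 ≤ bform n u' u' := by
    rcases eq_or_ne u' 0 with rfl | h
    · rw [bform_zero_left]
    · exact le_of_lt (hEpos u' hu' h)
  -- Cauchy-Schwarz on E
  have hs2 : (bform n u u') ^ 2 ≤ bform n u u * bform n u' u' := by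
    rcases eq_or_ne u' 0 with rfl | h
    · rw [bform_zero_right, bform_zero_left]; norm_num
    · have hq'pos := hEpos u' hu' h
      have hzE : bform n u' u' • u + (-(bform n u u')) • u' ∈ E :=
        E.add_mem (E.smul_mem _ hu) (E.smul_mem _ hu')
      have hnn : 0 ≤ bform n (bform n u' u' • u + (-(bform n u u')) • u')
          (bform n u' u' • u + (-(bform n u u')) • u') := by
        rcases eq_or_ne (bform n u' u' • u + (-(bform n u u')) • u') 0 with hz | hz
        · rw [hz, bform_zero_left]
        · exact le_of_lt (hEpos _ hzE hz)
      rw [bform_comb, hu'u] at hnn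
      exact aux_cs _ _ _ hq'pos (by linarith [hnn])
  -- Cauchy-Schwarz on the negative part
  have hm2 : (bform n v v') ^ 2 ≤ 1 := by
    have hzz : bform n (v + bform n v v' • v') (v + bform n v v' • v') =
        (bform n v v') ^ 2 - 1 := by
      simp only [bform_add_left, bform_add_right, bform_smul_left, bform_smul_right]
      rw [hv1, hv'1, hv'v]; ring
    rcases eq_or_ne (v + bform n v v' • v') 0 with hz | hz
    · rw [hz, bform_zero_left] at hzz; linarith
    · have hzperp : ∀ e ∈ E, bform n e (v + bform n v v' • v') = 0 := by
        intro e he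
        rw [bform_add_right, bform_smul_right, hv e he, hv' e he]; ring
      have := hperp _ hzperp hz
      linarith
  -- difference vector in E
  have hdiff : 0 ≤ bform n u u - 2 * bform n u u' + bform n u' u' := by
    have hzE : u - u' ∈ E := E.sub_mem hu hu'
    have hnn : 0 ≤ bform n (u - u') (u - u') := by
      rcases eq_or_ne (u - u') 0 with hz | hz
      · rw [hz, bform_zero_left]
      · exact le_of_lt (hEpos _ hzE hz)
    rw [bform_sub_left, bform_sub_right, bform_sub_right, hu'u] at hnn
    linarith
  -- abbreviations
  set q := bform n u u with hqdef
  set q' := bform n u' u' with hq'def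
  set s := bform n u u' with hsdef
  set m := bform n v v' with hmdef
  have hPsi : Psi n (u, v) = (2 / (1 - q)) • u + ((1 + q) / (1 - q)) • v := rfl
  have hPsi' : Psi n (u', v') = (2 / (1 - q')) • u' + ((1 + q') / (1 - q')) • v' := rfl
  clear_value q q' s m
  have h1q : (0:ℝ) < 1 - q := by linarith
  have h1q' : (0:ℝ) < 1 - q' := by linarith
  have h2q : (0:ℝ) < 1 + q := by linarith
  have h2q' : (0:ℝ) < 1 + q' := by linarith
  have h1qne : (1 - q) ≠ 0 := ne_of_gt h1q
  have h1q'ne : (1 - q') ≠ 0 := ne_of_gt h1q'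
  have h2qne : (1 + q) ≠ 0 := ne_of_gt h2q
  have h2q'ne : (1 + q') ≠ 0 := ne_of_gt h2q'
  have hPpos : (0:ℝ) < (1 + q) * (1 + q') := by positivity
  have hDpos : (0:ℝ) < (1 - q) * (1 - q') := by positivity
  -- pseudo-norms of the two points
  have hxx : bform n (Psi n (u, v)) (Psi n (u, v)) = -1 := by
    rw [hPsi, bform_comb, huv, hvu, hv1, ← hqdef]
    field_simp
    ring
  have hx'x' : bform n (Psi n (u', v')) (Psi n (u', v')) = -1 := by
    rw [hPsi', bform_comb, hu'v', hv'u', hv'1, ← hq'def]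
    field_simp
    ring
  have hxy : bform n (Psi n (u, v)) (Psi n (u', v')) =
      (2 / (1 - q)) * (2 / (1 - q')) * s + ((1 + q) / (1 - q)) * ((1 + q') / (1 - q')) * m := by
    rw [hPsi, hPsi', bform_comb, huv', hvu', ← hsdef, ← hmdef]
    ring
  set C := (2 / (1 + q)) * (2 / (1 + q')) * s + ((1 - q) / (1 + q)) * ((1 - q') / (1 + q'))
    with hCdef
  have hCalt : C = (4 * s + (1 - q) * (1 - q')) / ((1 + q) * (1 + q')) := by
    rw [hCdef, div_mul_div_comm, div_mul_eq_mul_div, div_mul_div_comm, ← add_div,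
      div_eq_div_iff (ne_of_gt hPpos) (ne_of_gt hPpos)]
    ring
  clear_value C
  have hCle : C ≤ 1 := by
    rw [hCalt, div_le_one hPpos]
    linarith [hdiff]
  have hCge : -1 ≤ C := by
    rw [hCalt, le_div_iff₀ hPpos]
    linarith [hs2, sq_nonneg (1 + s)]
  have hmle : -m ≤ 1 := by linarith [hm2, sq_nonneg (m + 1)]
  have hmge : (-1:ℝ) ≤ -m := by linarith [hm2, sq_nonneg (m - 1)]
  -- key identity
  have hkey : (bform n (Psi n (u, v)) (Psi n (u', v')) + 1) * ((1 - q) * (1 - q')) =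
      ((1 + q) * (1 + q')) * (C + m) := by
    rw [hxy, hCalt]
    field_simp
    ring
  -- the two points are distinct
  have hxne : Psi n (u, v) ≠ Psi n (u', v') := by
    intro heq
    have e1 : -((1 + q) / (1 - q)) = ((1 + q') / (1 - q')) * m := by
      have h1 : bform n (Psi n (u, v)) v = -((1 + q) / (1 - q)) := by
        rw [hPsi, bform_add_left, bform_smul_left, bform_smul_left, huv, hv1]; ring
      have h2 : bform n (Psi n (u', v')) v = ((1 + q') / (1 - q')) * m := by
        rw [hPsi', bform_add_left, bform_smul_left, bform_smul_left, hu'v, hv'v]; ring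
      rw [← h1, ← h2, heq]
    have e2 : ((1 + q) / (1 - q)) * m = -((1 + q') / (1 - q')) := by
      have h1 : bform n (Psi n (u, v)) v' = ((1 + q) / (1 - q)) * m := by
        rw [hPsi, bform_add_left, bform_smul_left, bform_smul_left, huv', ← hmdef]; ring
      have h2 : bform n (Psi n (u', v')) v' = -((1 + q') / (1 - q')) := by
        rw [hPsi', bform_add_left, bform_smul_left, bform_smul_left, hu'v', hv'1]; ring
      rw [← h1, ← h2, heq]
    set b := (1 + q) / (1 - q) with hbdef
    set b' := (1 + q') / (1 - q') with hb'def
    have hb1 : 1 ≤ b := by rw [hbdef, one_le_div h1q]; linarith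
    have hb'1 : 1 ≤ b' := by rw [hb'def, one_le_div h1q']; linarith
    have hsq : b ^ 2 = b' ^ 2 := by linear_combination (-b) * e1 - b' * e2
    have hfact : (b - b') * (b + b') = 0 := by linear_combination hsq
    have hbb' : b = b' := by
      rcases mul_eq_zero.mp hfact with h | h
      · linarith
      · linarith
    rw [hbb'] at e1
    have hm1 : m = -1 := by
      have hfac2 : b' * (m + 1) = 0 := by linear_combination -e1
      rcases mul_eq_zero.mp hfac2 with h | h
      · linarith
      · linarith
    have hvv' : v = v' := by
      by_contra hvne
      have hzperp : ∀ e ∈ E, bform n e (v - v') = 0 := by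
        intro e he
        rw [bform_sub_right, hv e he, hv' e he]; ring
      have hzz : bform n (v - v') (v - v') = 0 := by
        rw [bform_sub_left, bform_sub_right, bform_sub_right, hv'v, hv1, hv'1, ← hmdef, hm1]
        ring
      have := hperp (v - v') hzperp (sub_ne_zero.mpr hvne)
      linarith
    have hqq' : q = q' := by
      rw [hbdef, hb'def] at hbb'
      field_simp at hbb'
      ring_nf at hbb'
      linarith
    rw [hPsi, hPsi', ← hvv'] at heq
    rw [show (2:ℝ) / (1 - q) = 2 / (1 - q') from by rw [hqq'], hbb'] at heq
    have huu' : u = u' := by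
      have h3 : (2 / (1 - q')) • u = (2 / (1 - q')) • u' := add_right_cancel heq
      have h4 : (2:ℝ) / (1 - q') ≠ 0 := by positivity
      exact smul_right_injective _ h4 h3
    exact hne (by rw [huu', hvv'])
  -- reduce the RHS
  have hrhs : (Real.arccos (-m) < Real.arccos C) ↔ C < -m :=
    Real.strictAntiOn_arccos.lt_iff_gt (Set.mem_Icc.mpr ⟨hmge, hmle⟩)
      (Set.mem_Icc.mpr ⟨hCge, hCle⟩)
  rw [hrhs]
  -- reduce the LHS
  have hlhs : JoinedSpacelike n (Psi n (u, v)) (Psi n (u', v')) ↔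
      bform n (Psi n (u, v)) (Psi n (u', v')) < -1 := by
    constructor
    · rintro ⟨w, hw1, hw2, t, hy⟩
      have hb : bform n (Psi n (u, v)) (Psi n (u', v')) = -Real.cosh t := by
        rw [hy, bform_add_right, bform_smul_right, bform_smul_right, hxx, hw2]; ring
      have ht : t ≠ 0 := by
        rintro rfl
        apply hxne
        rw [hy]; simp
      rw [hb]
      have := Real.one_lt_cosh.mpr ht
      linarith
    · intro h
      set c := -(bform n (Psi n (u, v)) (Psi n (u', v'))) with hcdef
      have hbxy : bform n (Psi n (u, v)) (Psi n (u', v')) = -c := by rw [hcdef]; ring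
      clear_value c
      have hc1 : 1 < c := by linarith [hbxy ▸ h]
      set s0 := Real.sqrt (c ^ 2 - 1) with hs0def
      have hs0 : s0 ^ 2 = c ^ 2 - 1 := by
        rw [hs0def]; exact Real.sq_sqrt (by linarith [sq_nonneg (c - 1)])
      have hs0pos : 0 < s0 := by rw [hs0def]; exact Real.sqrt_pos.mpr (by linarith [sq_nonneg (c - 1)])
      clear_value s0
      set t := Real.log (c + s0) with htdef
      have hexp : Real.exp t = c + s0 := by
        rw [htdef]; exact Real.exp_log (by linarith)
      have htpos : 0 < t := by rw [htdef]; exact Real.log_pos (by linarith)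
      clear_value t
      have hcosh : Real.cosh t = c := by
        rw [Real.cosh_eq, hexp, Real.exp_neg, hexp]
        have hcs : (c + s0) ≠ 0 := ne_of_gt (by linarith)
        field_simp
        linear_combination hs0
      have hstpos : 0 < Real.sinh t := Real.sinh_pos_iff.mpr htpos
      have hstne : Real.sinh t ≠ 0 := ne_of_gt hstpos
      have hst2 : Real.sinh t ^ 2 = c ^ 2 - 1 := by
        have := Real.cosh_sq t
        rw [hcosh] at this
        linarith
      have hbyx : bform n (Psi n (u', v')) (Psi n (u, v)) = -c := by
        rw [bform_symm]; exact hbxy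
      refine ⟨(Real.sinh t)⁻¹ • (Psi n (u', v') - Real.cosh t • Psi n (u, v)), ?_, ?_, t, ?_⟩
      · simp only [bform_smul_left, bform_smul_right, bform_sub_left, bform_sub_right]
        rw [hxx, hx'x', hbxy, hbyx, hcosh]
        field_simp
        linear_combination -hst2
      · simp only [bform_smul_right, bform_sub_right]
        rw [hbxy, hxx, hcosh]
        ring
      · rw [smul_smul, mul_inv_cancel₀ hstne, one_smul]
        abel
  rw [hlhs]
  constructor
  · intro h
    by_contra hc
    push_neg at hc
    have hL : (bform n (Psi n (u, v)) (Psi n (u', v')) + 1) * ((1 - q) * (1 - q')) < 0 :=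
      mul_neg_of_neg_of_pos (by linarith) hDpos
    rw [hkey] at hL
    linarith [mul_nonneg hPpos.le (by linarith : (0:ℝ) ≤ C + m)]
  · intro h
    have hR : ((1 + q) * (1 + q')) * (C + m) < 0 :=
      mul_neg_of_pos_of_neg hPpos (by linarith)
    rw [← hkey] at hR
    by_contra hc
    push_neg at hc
    have := mul_nonneg (by linarith : (0:ℝ) ≤ bform n (Psi n (u, v)) (Psi n (u', v')) + 1)
      hDpos.le
    linarith
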